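/- Let r ∈ (0,∞) and let P be a Borel probability measure on ℝ^q satisfying the moment condition ∫ |x|^r dP(x) < ∞. Then for every n ∈ ℕ there exists a set α ⊆ ℝ^q with 1 ≤ card(α) ≤ n attaining the n-th quantization error, i.e. (∫ d(x,α)^r dP(x))^{1/r} = e_{n,r}(P); in particular the set C_{n,r}(P) of n-optimal sets of order r is non-empty. -/

import Mathlib

open MeasureTheory Filter Metric
open scoped ENNReal NNReal

/-- The `n`-th quantization error of order `r` for a measure `P`:
`e_{n,r}(P) = inf { (∫ d(x,α)^r dP)^{1/r} : α ⊆ E, 1 ≤ card α ≤ n }`. -/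
noncomputable def quantError {E : Type*} [MetricSpace E] [MeasurableSpace E]
    (P : Measure E) (r : ℝ) (n : ℕ) : ℝ :=
  sInf {e : ℝ | ∃ α : Finset E, 1 ≤ α.card ∧ α.card ≤ n ∧
    e = (∫ x, infDist x (↑α : Set E) ^ r ∂P) ^ (1 / r)}

/-- The upper quantization dimension of order `r`. -/
noncomputable def upperQuantDim {E : Type*} [MetricSpace E] [MeasurableSpace E]
    (P : Measure E) (r : ℝ) : ℝ :=
  limsup (fun n : ℕ => Real.log n / (- Real.log (quantError P r n))) atTop

/-- The lower quantization dimension of order `r`. -/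
noncomputable def lowerQuantDim {E : Type*} [MetricSpace E] [MeasurableSpace E]
    (P : Measure E) (r : ℝ) : ℝ :=
  liminf (fun n : ℕ => Real.log n / (- Real.log (quantError P r n))) atTop

/-- The `s`-dimensional upper quantization coefficient of order `r`. -/
noncomputable def upperQuantCoeff {E : Type*} [MetricSpace E] [MeasurableSpace E]
    (P : Measure E) (r s : ℝ) : ℝ≥0∞ :=
  limsup (fun n : ℕ => ENNReal.ofReal ((n : ℝ) ^ (1 / s) * quantError P r n)) atTop

/-- The `s`-dimensional lower quantization coefficient of order `r`. -/
noncomputable def lowerQuantCoeff {E : Type*} [MetricSpace E] [MeasurableSpace E]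
    (P : Measure E) (r s : ℝ) : ℝ≥0∞ :=
  liminf (fun n : ℕ => ENNReal.ofReal ((n : ℝ) ^ (1 / s) * quantError P r n)) atTop



section Aux

/-- Limit of finite infima. -/
private lemma tendsto_finset_inf' {ι : Type*} {s : Finset ι} (hs : s.Nonempty)
    (f : ℕ → ι → ℝ) (g : ι → ℝ)
    (h : ∀ i ∈ s, Tendsto (fun k => f k i) atTop (nhds (g i))) :
    Tendsto (fun k => s.inf' hs (fun i => f k i)) atTop (nhds (s.inf' hs g)) := by
  induction hs using Finset.Nonempty.cons_induction with
  | singleton a =>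
    simp only [Finset.inf'_singleton]
    exact h a (Finset.mem_singleton_self a)
  | @cons a s ha hs ih =>
    have key := (h a (Finset.mem_cons_self a s)).min
      (ih fun i hi => h i (Finset.mem_cons_of_mem hi))
    have e1 : ∀ (F : ι → ℝ) (hh : (Finset.cons a s ha).Nonempty),
        (Finset.cons a s ha).inf' hh F = F a ⊓ s.inf' hs F :=
      fun F hh => Finset.inf'_cons hs F
    simpa only [e1] using key

/-- Any sequence in a proper normed space has a subsequence which either converges
or whose norm tends to infinity. -/
private lemma exists_subseq_conv_or_div {E : Type*} [NormedAddCommGroup E] [ProperSpace E]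
    (y : ℕ → E) :
    ∃ φ : ℕ → ℕ, StrictMono φ ∧
      ((∃ l, Tendsto (fun k => y (φ k)) atTop (nhds l)) ∨
        Tendsto (fun k => ‖y (φ k)‖) atTop atTop) := by
  by_cases h : ∃ M : ℝ, ∃ᶠ k in atTop, ‖y k‖ ≤ M
  · obtain ⟨M, hM⟩ := h
    obtain ⟨φ, hφ, hφM⟩ := Filter.extraction_of_frequently_atTop hM
    obtain ⟨l, -, ψ, hψ, hl⟩ := (isCompact_closedBall (0 : E) M).tendsto_subseq
      (x := fun k => y (φ k))
      (fun k => by simpa [Metric.mem_closedBall, dist_zero_right] using hφM k)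
    exact ⟨φ ∘ ψ, hφ.comp hψ, Or.inl ⟨l, hl⟩⟩
  · push_neg at h
    refine ⟨id, strictMono_id, Or.inr (Filter.tendsto_atTop.2 fun M => ?_)⟩
    have := h M
    filter_upwards [this] with k hk
    exact hk.le

/-- Coordinatewise subsequence extraction. -/
private lemma exists_subseq_all {E : Type*} [NormedAddCommGroup E] [ProperSpace E]
    {n : ℕ} (y : ℕ → Fin n → E) :
    ∃ φ : ℕ → ℕ, StrictMono φ ∧ ∀ i : Fin n,
      ((∃ l, Tendsto (fun k => y (φ k) i) atTop (nhds l)) ∨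
        Tendsto (fun k => ‖y (φ k) i‖) atTop atTop) := by
  suffices h : ∀ s : Finset (Fin n), ∃ φ : ℕ → ℕ, StrictMono φ ∧ ∀ i ∈ s,
      ((∃ l, Tendsto (fun k => y (φ k) i) atTop (nhds l)) ∨
        Tendsto (fun k => ‖y (φ k) i‖) atTop atTop) by
    obtain ⟨φ, hφ, hall⟩ := h Finset.univ
    exact ⟨φ, hφ, fun i => hall i (Finset.mem_univ i)⟩
  intro s
  induction s using Finset.induction with
  | empty => exact ⟨id, strictMono_id, by simp⟩
  | @insert a s ha ih =>
    obtain ⟨φ, hφ, hall⟩ := ih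
    obtain ⟨ψ, hψ, hone⟩ := exists_subseq_conv_or_div (fun k => y (φ k) a)
    refine ⟨φ ∘ ψ, hφ.comp hψ, fun i hi => ?_⟩
    rcases Finset.mem_insert.mp hi with rfl | hi
    · exact hone
    · rcases hall i hi with ⟨l, hl⟩ | hd
      · exact Or.inl ⟨l, hl.comp hψ.tendsto_atTop⟩
      · exact Or.inr (hd.comp hψ.tendsto_atTop)

end Aux
section Main

variable {q : ℕ}

private lemma infDist_range_eq_inf' {n : ℕ} [Nonempty (Fin n)]
    (a : Fin n → EuclideanSpace ℝ (Fin q)) (x : EuclideanSpace ℝ (Fin q)) :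
    infDist x (Set.range a)
      = Finset.univ.inf' Finset.univ_nonempty (fun i => dist x (a i)) := by
  rw [Metric.infDist_eq_iInf,
    ← (Set.rangeFactorization_surjective (f := a)).iInf_comp (fun y => dist x (y : EuclideanSpace ℝ (Fin q))),
    Finset.inf'_eq_csInf_image, Finset.coe_univ, Set.image_univ, sInf_range]
  rfl

private lemma cont_rpow_infDist {r : ℝ} (hr : 0 < r) (s : Set (EuclideanSpace ℝ (Fin q))) :
    Continuous fun x : EuclideanSpace ℝ (Fin q) => infDist x s ^ r :=
  continuous_iff_continuousAt.2 fun x =>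
    (Real.continuousAt_rpow_const _ r (Or.inr hr.le)).comp (continuous_infDist_pt s).continuousAt

private lemma rpow_add_le_aux {r : ℝ} (hr : 0 < r) {u v : ℝ} (hu : 0 ≤ u) (hv : 0 ≤ v) :
    (u + v) ^ r ≤ 2 ^ r * (u ^ r + v ^ r) := by
  have h1 : u + v ≤ 2 * max u v := by
    rcases le_total u v with h | h
    · rw [max_eq_right h]; linarith
    · rw [max_eq_left h]; linarith
  calc (u + v) ^ r ≤ (2 * max u v) ^ r :=
        Real.rpow_le_rpow (by positivity) h1 hr.le
    _ = 2 ^ r * (max u v) ^ r := Real.mul_rpow (by norm_num) (le_max_of_le_left hu)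
    _ ≤ 2 ^ r * (u ^ r + v ^ r) := by
        refine mul_le_mul_of_nonneg_left ?_ (Real.rpow_nonneg (by norm_num) r)
        rcases le_total u v with h | h
        · rw [max_eq_right h]; exact le_add_of_nonneg_left (Real.rpow_nonneg hu r)
        · rw [max_eq_left h]; exact le_add_of_nonneg_right (Real.rpow_nonneg hv r)

private lemma integrable_rpow_infDist {r : ℝ} (hr : 0 < r)
    (P : Measure (EuclideanSpace ℝ (Fin q))) [IsProbabilityMeasure P]
    (hmom : Integrable (fun x => ‖x‖ ^ r) P)
    {n : ℕ} [Nonempty (Fin n)] (a : Fin n → EuclideanSpace ℝ (Fin q)) :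
    Integrable (fun x => infDist x (Set.range a) ^ r) P := by
  obtain ⟨i₀⟩ := ‹Nonempty (Fin n)›
  have hbound : Integrable (fun x : EuclideanSpace ℝ (Fin q) =>
      2 ^ r * (‖x‖ ^ r + ‖a i₀‖ ^ r)) P :=
    (hmom.add (integrable_const _)).const_mul _
  refine hbound.mono' (cont_rpow_infDist hr _).aestronglyMeasurable (ae_of_all _ fun x => ?_)
  have h0 : (0:ℝ) ≤ infDist x (Set.range a) := infDist_nonneg
  rw [Real.norm_of_nonneg (Real.rpow_nonneg h0 r)]
  calc infDist x (Set.range a) ^ r ≤ dist x (a i₀) ^ r :=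
        Real.rpow_le_rpow h0 (infDist_le_dist_of_mem (Set.mem_range_self i₀)) hr.le
    _ ≤ (‖x‖ + ‖a i₀‖) ^ r :=
        Real.rpow_le_rpow dist_nonneg (by rw [dist_eq_norm]; exact norm_sub_le _ _) hr.le
    _ ≤ 2 ^ r * (‖x‖ ^ r + ‖a i₀‖ ^ r) := rpow_add_le_aux hr (norm_nonneg _) (norm_nonneg _)

private lemma tendsto_infDist_range {n : ℕ} [Nonempty (Fin n)]
    {T : Finset (Fin n)} (hT : T.Nonempty)
    {a : ℕ → Fin n → EuclideanSpace ℝ (Fin q)} {b : Fin n → EuclideanSpace ℝ (Fin q)}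
    (hconv : ∀ i ∈ T, Tendsto (fun k => a k i) atTop (nhds (b i)))
    (hdiv : ∀ i ∉ T, Tendsto (fun k => ‖a k i‖) atTop atTop)
    (hb : ∀ i ∉ T, ∃ j ∈ T, b i = b j) (x : EuclideanSpace ℝ (Fin q)) :
    Tendsto (fun k => infDist x (Set.range (a k))) atTop
      (nhds (infDist x (Set.range b))) := by
  classical
  set L := T.inf' hT (fun i => dist x (b i)) with hL
  have hbL : infDist x (Set.range b) = L := by
    rw [infDist_range_eq_inf']
    apply le_antisymm
    · exact Finset.le_inf' hT _ fun i _ => Finset.inf'_le _ (Finset.mem_univ i)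
    · refine Finset.le_inf' _ _ fun i _ => ?_
      by_cases hi : i ∈ T
      · exact Finset.inf'_le _ hi
      · obtain ⟨j, hj, hji⟩ := hb i hi
        rw [hji]; exact Finset.inf'_le _ hj
  have hTl : Tendsto (fun k => T.inf' hT (fun i => dist x (a k i))) atTop (nhds L) :=
    tendsto_finset_inf' hT _ _ fun i hi => tendsto_const_nhds.dist (hconv i hi)
  have h1 : ∀ᶠ k in atTop, T.inf' hT (fun i => dist x (a k i)) < L + 1 :=
    hTl.eventually_lt_const (by linarith)
  have h2 : ∀ᶠ k in atTop, ∀ i ∈ Finset.univ \ T, L + 1 ≤ dist x (a k i) := by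
    rw [eventually_all_finset]
    intro i hi
    have hi' : i ∉ T := (Finset.mem_sdiff.mp hi).2
    have h3 : Tendsto (fun k => ‖a k i‖ - ‖x‖) atTop atTop :=
      tendsto_atTop_add_const_right _ _ (hdiv i hi')
    have h4 : Tendsto (fun k => dist x (a k i)) atTop atTop := by
      refine tendsto_atTop_mono (fun k => ?_) h3
      calc ‖a k i‖ - ‖x‖ ≤ ‖a k i - x‖ := norm_sub_norm_le _ _
        _ = dist x (a k i) := by rw [← dist_eq_norm, dist_comm]
    exact h4.eventually_ge_atTop (L + 1)
  have hev : ∀ᶠ k in atTop,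
      Finset.univ.inf' Finset.univ_nonempty (fun i => dist x (a k i))
        = T.inf' hT (fun i => dist x (a k i)) := by
    filter_upwards [h1, h2] with k hk1 hk2
    apply le_antisymm
    · exact Finset.le_inf' hT _ fun i _ => Finset.inf'_le _ (Finset.mem_univ i)
    · refine Finset.le_inf' _ _ fun i _ => ?_
      by_cases hi : i ∈ T
      · exact Finset.inf'_le _ hi
      · exact le_trans hk1.le (hk2 i (Finset.mem_sdiff.mpr ⟨Finset.mem_univ i, hi⟩))
  have hfin : Tendsto (fun k => Finset.univ.inf' Finset.univ_nonempty
      (fun i => dist x (a k i))) atTop (nhds L) :=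
    hTl.congr' (hev.mono fun k hk => hk.symm)
  rw [hbL]
  exact hfin.congr fun k => (infDist_range_eq_inf' (a k) x).symm

end Main
section Main2

variable {q : ℕ}

private lemma exists_min {r : ℝ} (hr : 0 < r)
    (P : Measure (EuclideanSpace ℝ (Fin q))) [IsProbabilityMeasure P]
    (hmom : Integrable (fun x => ‖x‖ ^ r) P) (n : ℕ) [Nonempty (Fin n)] :
    ∃ a : Fin n → EuclideanSpace ℝ (Fin q), ∀ c : Fin n → EuclideanSpace ℝ (Fin q),
      (∫ x, infDist x (Set.range a) ^ r ∂P) ≤ ∫ x, infDist x (Set.range c) ^ r ∂P := by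
  classical
  set F : (Fin n → EuclideanSpace ℝ (Fin q)) → ℝ :=
    fun a => ∫ x, infDist x (Set.range a) ^ r ∂P with hF
  have hF0 : ∀ a, 0 ≤ F a := fun a =>
    integral_nonneg fun x => Real.rpow_nonneg infDist_nonneg r
  have hne : (Set.range F).Nonempty := Set.range_nonempty F
  have hbdd : BddBelow (Set.range F) := ⟨0, by rintro v ⟨c, rfl⟩; exact hF0 c⟩
  set I := sInf (Set.range F) with hI
  have hI0 : 0 ≤ I := le_csInf hne (by rintro v ⟨c, rfl⟩; exact hF0 c)
  have hIle : ∀ c, I ≤ F c := fun c => csInf_le hbdd ⟨c, rfl⟩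
  obtain ⟨u, -, hu, hmem⟩ := exists_seq_tendsto_sInf hne hbdd
  choose a ha using hmem
  have hFa : Tendsto (fun k => F (a k)) atTop (nhds I) := hu.congr fun k => (ha k).symm
  obtain ⟨φ, hφ, hprop⟩ := exists_subseq_all a
  set T : Finset (Fin n) := Finset.univ.filter
    (fun i => ∃ l, Tendsto (fun k => a (φ k) i) atTop (nhds l)) with hT
  have hdiv : ∀ i ∉ T, Tendsto (fun k => ‖a (φ k) i‖) atTop atTop := by
    intro i hi
    rcases hprop i with h | h
    · exact absurd (Finset.mem_filter.mpr ⟨Finset.mem_univ i, h⟩) hi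
    · exact h
  have hmeas : ∀ k, Measurable fun x : EuclideanSpace ℝ (Fin q) =>
      ENNReal.ofReal (infDist x (Set.range (a (φ k))) ^ r) :=
    fun k => (cont_rpow_infDist hr _).measurable.ennreal_ofReal
  have hlint : ∀ c : Fin n → EuclideanSpace ℝ (Fin q),
      ∫⁻ x, ENNReal.ofReal (infDist x (Set.range c) ^ r) ∂P = ENNReal.ofReal (F c) :=
    fun c => (ofReal_integral_eq_lintegral_ofReal (integrable_rpow_infDist hr P hmom c)
      (ae_of_all _ fun x => Real.rpow_nonneg infDist_nonneg r)).symm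
  have hlim_int : Tendsto
      (fun k => ∫⁻ x, ENNReal.ofReal (infDist x (Set.range (a (φ k))) ^ r) ∂P)
      atTop (nhds (ENNReal.ofReal I)) := by
    simp only [hlint]
    exact (ENNReal.continuous_ofReal.tendsto I).comp (hFa.comp hφ.tendsto_atTop)
  have hliminf_int : liminf
      (fun k => ∫⁻ x, ENNReal.ofReal (infDist x (Set.range (a (φ k))) ^ r) ∂P) atTop
      = ENNReal.ofReal I := hlim_int.liminf_eq
  have hfatou := lintegral_liminf_le
    (f := fun k x => ENNReal.ofReal (infDist x (Set.range (a (φ k))) ^ r)) hmeas (μ := P) (u := atTop)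
  rw [hliminf_int] at hfatou
  have hTne : T.Nonempty := by
    by_contra hTe
    have hall : ∀ i, Tendsto (fun k => ‖a (φ k) i‖) atTop atTop := fun i =>
      hdiv i fun hi => hTe ⟨i, hi⟩
    have hpt : ∀ x : EuclideanSpace ℝ (Fin q),
        Tendsto (fun k => infDist x (Set.range (a (φ k)))) atTop atTop := by
      intro x
      rw [Filter.tendsto_atTop]
      intro M
      have hev : ∀ᶠ k in atTop, ∀ i ∈ (Finset.univ : Finset (Fin n)),
          M ≤ dist x (a (φ k) i) := by
        rw [eventually_all_finset]
        intro i _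
        have h3 : Tendsto (fun k => ‖a (φ k) i‖ - ‖x‖) atTop atTop :=
          tendsto_atTop_add_const_right _ _ (hall i)
        have h4 : Tendsto (fun k => dist x (a (φ k) i)) atTop atTop := by
          refine tendsto_atTop_mono (fun k => ?_) h3
          calc ‖a (φ k) i‖ - ‖x‖ ≤ ‖a (φ k) i - x‖ := norm_sub_norm_le _ _
            _ = dist x (a (φ k) i) := by rw [← dist_eq_norm, dist_comm]
        exact h4.eventually_ge_atTop M
      filter_upwards [hev] with k hk
      rw [infDist_range_eq_inf']
      exact Finset.le_inf' _ _ fun i hi => hk i hi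
    have htopint : ∫⁻ x, liminf
        (fun k => ENNReal.ofReal (infDist x (Set.range (a (φ k))) ^ r)) atTop ∂P = ⊤ := by
      have hptop : ∀ x : EuclideanSpace ℝ (Fin q), liminf
          (fun k => ENNReal.ofReal (infDist x (Set.range (a (φ k))) ^ r)) atTop = ⊤ :=
        fun x => (ENNReal.tendsto_ofReal_atTop.comp
          ((tendsto_rpow_atTop hr).comp (hpt x))).liminf_eq
      rw [lintegral_congr hptop, lintegral_const, measure_univ, mul_one]
    rw [htopint] at hfatou
    exact absurd (hfatou.trans_lt ENNReal.ofReal_lt_top) (lt_irrefl ⊤)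
  have hTne2 := hTne
  obtain ⟨i₀, hi₀⟩ := hTne2
  have hsel : ∀ i : Fin n, ∃ l : EuclideanSpace ℝ (Fin q),
      i ∈ T → Tendsto (fun k => a (φ k) i) atTop (nhds l) := by
    intro i
    by_cases hi : i ∈ T
    · obtain ⟨l, hl⟩ := (Finset.mem_filter.mp hi).2
      exact ⟨l, fun _ => hl⟩
    · exact ⟨0, fun h => absurd h hi⟩
  choose l hl using hsel
  set b : Fin n → EuclideanSpace ℝ (Fin q) := fun i => if i ∈ T then l i else l i₀ with hb
  have hconv : ∀ i ∈ T, Tendsto (fun k => a (φ k) i) atTop (nhds (b i)) := by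
    intro i hi
    simp only [hb, hi, if_pos]
    exact hl i hi
  have hbj : ∀ i ∉ T, ∃ j ∈ T, b i = b j := fun i hi =>
    ⟨i₀, hi₀, by simp [hb, hi, hi₀]⟩
  have hpt := tendsto_infDist_range hTne hconv hdiv hbj
  have heq : ∫⁻ x, liminf
      (fun k => ENNReal.ofReal (infDist x (Set.range (a (φ k))) ^ r)) atTop ∂P
      = ENNReal.ofReal (F b) := by
    rw [← hlint b]
    refine lintegral_congr fun x => ?_
    exact ((ENNReal.continuous_ofReal.tendsto _).comp
      (((Real.continuousAt_rpow_const _ r (Or.inr hr.le)).tendsto).comp (hpt x))).liminf_eq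
  rw [heq] at hfatou
  have hFbI : F b ≤ I := (ENNReal.ofReal_le_ofReal_iff hI0).mp hfatou
  exact ⟨b, fun c => hFbI.trans (hIle c)⟩

end Main2
private lemma exists_range_eq {q : ℕ} {n : ℕ} (β : Finset (EuclideanSpace ℝ (Fin q)))
    (hβ1 : 1 ≤ β.card) (hβn : β.card ≤ n) :
    ∃ c : Fin n → EuclideanSpace ℝ (Fin q), Set.range c = (↑β : Set (EuclideanSpace ℝ (Fin q))) := by
  have hβpos : 0 < β.card := hβ1
  refine ⟨fun i => (β.equivFin.symm ⟨(i : ℕ) % β.card, Nat.mod_lt _ hβpos⟩ : _), ?_⟩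
  ext x
  constructor
  · rintro ⟨i, rfl⟩
    exact (β.equivFin.symm _).2
  · intro hx
    refine ⟨⟨(β.equivFin ⟨x, hx⟩ : ℕ), lt_of_lt_of_le (β.equivFin ⟨x, hx⟩).2 hβn⟩, ?_⟩
    have hmod : ((⟨(β.equivFin ⟨x, hx⟩ : ℕ) % β.card, Nat.mod_lt _ hβpos⟩ : Fin β.card))
        = β.equivFin ⟨x, hx⟩ := by
      ext
      exact Nat.mod_eq_of_lt (β.equivFin ⟨x, hx⟩).2
    simp only [hmod, Equiv.symm_apply_apply]

/-- For `r ∈ (0,∞)` and a Borel probability measure `P` on `ℝ^q` with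
`∫ |x|^r dP < ∞`, for every `n ≥ 1` there is a set `α` with `1 ≤ card α ≤ n` attaining
the `n`-th quantization error; in particular `C_{n,r}(P) ≠ ∅`. -/
theorem exists_optimal_set (q : ℕ) (r : ℝ) (hr : 0 < r)
    (P : Measure (EuclideanSpace ℝ (Fin q))) [IsProbabilityMeasure P]
    (hmom : Integrable (fun x => ‖x‖ ^ r) P) (n : ℕ) (hn : 1 ≤ n) :
    ∃ α : Finset (EuclideanSpace ℝ (Fin q)), 1 ≤ α.card ∧ α.card ≤ n ∧
      (∫ x, infDist x (↑α : Set (EuclideanSpace ℝ (Fin q))) ^ r ∂P) ^ (1 / r) =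
        quantError P r n := by
  classical
  have hnn : Nonempty (Fin n) := Fin.pos_iff_nonempty.mp hn
  obtain ⟨a, hamin⟩ := exists_min hr P hmom n
  have hco : (↑(Finset.image a Finset.univ) : Set (EuclideanSpace ℝ (Fin q))) = Set.range a := by
    rw [Finset.coe_image, Finset.coe_univ, Set.image_univ]
  have hcard1 : 1 ≤ (Finset.image a Finset.univ).card :=
    Finset.card_pos.mpr (Finset.univ_nonempty.image a)
  have hcardn : (Finset.image a Finset.univ).card ≤ n :=
    Finset.card_image_le.trans (by simp)
  refine ⟨Finset.image a Finset.univ, hcard1, hcardn, ?_⟩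
  rw [hco]
  symm
  apply IsLeast.csInf_eq
  constructor
  · exact ⟨Finset.image a Finset.univ, hcard1, hcardn, by rw [hco]⟩
  · rintro e ⟨β, hβ1, hβn, rfl⟩
    obtain ⟨c, hrange⟩ := exists_range_eq β hβ1 hβn
    rw [← hrange]
    exact Real.rpow_le_rpow
      (integral_nonneg fun x => Real.rpow_nonneg infDist_nonneg r)
      (hamin c) (by positivity)
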